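/- For any graph G and any 1 ≤ g ≤ |V|, the critical numbers satisfy m(G) ≤ m(G, g) + g − 1, where m(G, g) is the minimum number of corrupt vertices needed to prevent identification of g truthful vertices and m(G) = m(G, 1). -/

import Mathlib

open SimpleGraph

/-- A configuration `f` (true = truthful, false = corrupt) is consistent with the
reports `rep` if every truthful vertex reports the true type of each of its neighbors. -/
def Consistent {V : Type*} (G : SimpleGraph V) (f : V → Bool) (rep : V → V → Bool) : Prop :=
  ∀ u v : V, G.Adj u v → f u = true → rep u v = f v

/-- The number of corrupt vertices in a configuration. -/
noncomputable def badCount {V : Type*} (f : V → Bool) : ℕ :=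
  {v : V | f v = false}.ncard

/-- `m(G)`: the minimum budget `b` for which the corrupt party has a placement of at most
`b` corrupt vertices and reports making it impossible to identify a single truthful vertex,
i.e. every vertex is corrupt in some configuration consistent with the reports that has
at most `b` corrupt vertices. -/
noncomputable def mNum {V : Type*} [Fintype V] (G : SimpleGraph V) : ℕ :=
  sInf {b | ∃ rep : V → V → Bool, ∀ v : V, ∃ f : V → Bool,
    Consistent G f rep ∧ badCount f ≤ b ∧ f v = false}

/-- `m(G,g)`: the minimum budget `b` such that for some reports, the set of vertices
that are truthful in every configuration consistent with the reports having at most `b`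
corrupt vertices has size less than `g` (so `g` truthful vertices cannot be identified). -/
noncomputable def mNumG {V : Type*} [Fintype V] (G : SimpleGraph V) (g : ℕ) : ℕ :=
  sInf {b | ∃ rep : V → V → Bool,
    {v : V | ∀ f : V → Bool, Consistent G f rep → badCount f ≤ b → f v = true}.ncard < g}

/-- `U` is a `g`-remainder `k`-vertex separator of `G`: after removing `U`, the connected
components of size greater than `k` have total size less than `g`. -/
def IsGKSep {V : Type*} (G : SimpleGraph V) (U : Finset V) (k g : ℕ) : Prop :=
  {v : ((↑U : Set V)ᶜ : Set V) |
    k < ((G.induce ((↑U : Set V)ᶜ)).connectedComponentMk v).supp.ncard}.ncard < g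

/-- `S_G(k,g)`: the minimum size of a `g`-remainder `k`-vertex separator. -/
noncomputable def sepNumG {V : Type*} [Fintype V] (G : SimpleGraph V) (k g : ℕ) : ℕ :=
  sInf {s | ∃ U : Finset V, IsGKSep G U k g ∧ U.card = s}

/-- `min_k (S_G(k,g) + k)`. -/
noncomputable def minSepG {V : Type*} [Fintype V] (G : SimpleGraph V) (g : ℕ) : ℕ :=
  sInf {x | ∃ k, x = sepNumG G k g + k}

theorem mNum_le_mNumG_add {V : Type*} [Fintype V] (G : SimpleGraph V) (g : ℕ)
    (hg1 : 1 ≤ g) (hg2 : g ≤ Fintype.card V) :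
    mNum G = mNumG G 1 ∧ mNum G ≤ mNumG G g + g - 1 := by
  classical
  constructor
  · unfold mNum mNumG
    congr 1
    ext b
    simp only [Set.mem_setOf_eq]
    constructor
    · rintro ⟨rep, h⟩
      refine ⟨rep, ?_⟩
      have hempty : {v : V | ∀ f : V → Bool, Consistent G f rep → badCount f ≤ b → f v = true} = ∅ := by
        ext v
        simp only [Set.mem_setOf_eq, Set.mem_empty_iff_false, iff_false, not_forall]
        obtain ⟨f, hc, hb, hv⟩ := h v
        exact ⟨f, hc, hb, by simp [hv]⟩
      rw [hempty]
      simp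
    · rintro ⟨rep, h⟩
      refine ⟨rep, fun v => ?_⟩
      have hempty : {v : V | ∀ f : V → Bool, Consistent G f rep → badCount f ≤ b → f v = true} = ∅ := by
        have hfin : {v : V | ∀ f : V → Bool, Consistent G f rep → badCount f ≤ b → f v = true}.Finite :=
          Set.toFinite _
        exact (Set.ncard_eq_zero hfin).mp (Nat.lt_one_iff.mp h)
      have hv : v ∉ ({} : Set V) := Set.notMem_empty v
      rw [← hempty, Set.mem_setOf_eq] at hv
      push_neg at hv
      obtain ⟨f, hc, hb, hv⟩ := hv
      exact ⟨f, hc, hb, by simpa using hv⟩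
  · set b := mNumG G g with hb
    have hmem : Fintype.card V ∈ {b | ∃ rep : V → V → Bool,
          {v : V | ∀ f : V → Bool, Consistent G f rep → badCount f ≤ b → f v = true}.ncard < g} := by
        refine ⟨fun _ _ => false, ?_⟩
        have hempty : {v : V | ∀ f : V → Bool, Consistent G f (fun _ _ => false) →
            badCount f ≤ Fintype.card V → f v = true} = ∅ := by
          ext v
          simp only [Set.mem_setOf_eq, Set.mem_empty_iff_false, iff_false, not_forall]
          refine ⟨fun _ => false, fun u w _ h => by simp at h, ?_, by simp⟩
          · unfold badCount
            calc _ ≤ (Set.univ : Set V).ncard :=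
                  Set.ncard_le_ncard (Set.subset_univ _) Set.finite_univ
              _ = Fintype.card V := by rw [Set.ncard_univ, Nat.card_eq_fintype_card]
        rw [hempty]
        simp only [Set.ncard_empty]; omega
    have hbmem : b ∈ {b | ∃ rep : V → V → Bool,
        {v : V | ∀ f : V → Bool, Consistent G f rep → badCount f ≤ b → f v = true}.ncard < g} := by
      rw [hb]
      exact Nat.sInf_mem ⟨_, hmem⟩
    obtain ⟨rep, hT⟩ := hbmem
    set T := {v : V | ∀ f : V → Bool, Consistent G f rep → badCount f ≤ b → f v = true} with hTdef
    -- there is a vertex outside T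
    have hVpos : 0 < Fintype.card V := lt_of_lt_of_le hg1 hg2
    have hTne : T ≠ Set.univ := by
      intro h
      rw [h, Set.ncard_univ, Nat.card_eq_fintype_card] at hT
      omega
    have hex : ∃ v0 : V, v0 ∉ T := by
      by_contra hc
      push_neg at hc
      exact hTne (Set.eq_univ_of_forall hc)
    obtain ⟨v0, hv0⟩ := hex
    have hf0 : ∃ f : V → Bool, Consistent G f rep ∧ badCount f ≤ b := by
      have := hv0
      rw [hTdef, Set.mem_setOf_eq] at this
      push_neg at this
      obtain ⟨f, hc, hbc, _⟩ := this
      exact ⟨f, hc, hbc⟩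
    -- the new reports
    set rep' : V → V → Bool := fun u w => if w ∈ T then false else rep u w with hrep'
    have hmem : (b + g - 1) ∈ {b | ∃ rep : V → V → Bool, ∀ v : V, ∃ f : V → Bool,
        Consistent G f rep ∧ badCount f ≤ b ∧ f v = false} := by
      refine ⟨rep', fun v => ?_⟩
      have hwit : ∃ f : V → Bool, Consistent G f rep ∧ badCount f ≤ b ∧ (v ∉ T → f v = false) := by
        by_cases hv : v ∈ T
        · obtain ⟨f, hc, hbc⟩ := hf0
          exact ⟨f, hc, hbc, fun h => absurd hv h⟩
        · have := hv
          rw [hTdef, Set.mem_setOf_eq] at this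
          push_neg at this
          obtain ⟨f, hc, hbc, hfv⟩ := this
          exact ⟨f, hc, hbc, fun _ => by simpa using hfv⟩
      obtain ⟨f, hc, hbc, hfv⟩ := hwit
      refine ⟨fun u => if u ∈ T then false else f u, ?_, ?_, ?_⟩
      · intro u w hadj hu
        simp only at hu
        by_cases huT : u ∈ T
        · simp [huT] at hu
        · simp only [huT, if_false] at hu
          by_cases hwT : w ∈ T
          · simp [hrep', hwT]
          · simp only [hrep', hwT, if_false]
            exact hc u w hadj hu
      · have hsub : {u : V | (if u ∈ T then false else f u) = false} ⊆
            {u : V | f u = false} ∪ T := by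
          intro u hu
          by_cases huT : u ∈ T
          · exact Or.inr huT
          · simp only [Set.mem_setOf_eq, huT, if_false] at hu
            exact Or.inl hu
        have h1 : badCount (fun u => if u ∈ T then false else f u) ≤
            ({u : V | f u = false} ∪ T).ncard :=
          Set.ncard_le_ncard hsub (Set.toFinite _)
        have h2 : ({u : V | f u = false} ∪ T).ncard ≤ badCount f + T.ncard :=
          Set.ncard_union_le _ _
        have h3 : T.ncard ≤ g - 1 := by omega
        have : badCount (fun u => if u ∈ T then false else f u) ≤ b + (g - 1) := by
          calc badCount (fun u => if u ∈ T then false else f u)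
              ≤ badCount f + T.ncard := le_trans h1 h2
            _ ≤ b + (g - 1) := Nat.add_le_add hbc h3
        omega
      · by_cases hv : v ∈ T
        · simp [hv]
        · simp [hv, hfv hv]
    calc mNum G ≤ b + g - 1 := Nat.sInf_le hmem
      _ = mNumG G g + g - 1 := by rw [hb]
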